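/- Fix integers p ≥ 1, m ≥ 1 and a real ν > 0. For any vectors v₁, …, v_m ∈ ℝ^p and any symmetric positive definite p×p real matrix Σ, the operator norm of the matrix Σ_{t=1}^m v_t v_tᵀ/(1 + v_tᵀΣ⁻¹v_t/ν) is at most m·ν·λ_max(Σ). -/

import Mathlib

set_option synthInstance.maxHeartbeats 1000000
set_option maxHeartbeats 1000000

open Matrix

/-- The ℓ²-operator norm of a real square matrix. -/
noncomputable def matOpNorm {p : ℕ} (A : Matrix (Fin p) (Fin p) ℝ) : ℝ :=
  ‖Matrix.toEuclideanCLM (𝕜 := ℝ) A‖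

lemma vecMulVec_mulVec' {p : ℕ} (v y : Fin p → ℝ) :
    vecMulVec v v *ᵥ y = (v ⬝ᵥ y) • v := by
  funext i
  simp only [vecMulVec_apply, mulVec, dotProduct, Pi.smul_apply, smul_eq_mul,
    Finset.sum_mul]
  exact Finset.sum_congr rfl fun j _ => by ring

lemma matOpNorm_vecMulVec_le {p : ℕ} (v : Fin p → ℝ) :
    matOpNorm (vecMulVec v v) ≤ v ⬝ᵥ v := by
  have hdp : (0:ℝ) ≤ v ⬝ᵥ v := Finset.sum_nonneg fun i _ => mul_self_nonneg _
  refine ContinuousLinearMap.opNorm_le_bound _ hdp fun x => ?_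
  set sv : EuclideanSpace ℝ (Fin p) := (WithLp.equiv 2 (Fin p → ℝ)).symm v with hsv
  have hx : x = (WithLp.equiv 2 (Fin p → ℝ)).symm (WithLp.equiv 2 (Fin p → ℝ) x) := rfl
  have happ : toEuclideanCLM (𝕜 := ℝ) (vecMulVec v v) x
      = (v ⬝ᵥ (WithLp.equiv 2 (Fin p → ℝ) x)) • sv := by
    conv_lhs => rw [hx]
    show WithLp.toLp 2 (vecMulVec v v *ᵥ _) = _
    rw [vecMulVec_mulVec']
    rfl
  have hinner : ∀ z : EuclideanSpace ℝ (Fin p),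
      v ⬝ᵥ (WithLp.equiv 2 (Fin p → ℝ) z) = inner ℝ sv z := by
    intro z
    simp [PiLp.inner_apply, dotProduct, hsv, mul_comm]
  have hsv2 : ‖sv‖ * ‖sv‖ = v ⬝ᵥ v := by
    rw [← real_inner_self_eq_norm_mul_norm, ← hinner sv]
    rfl
  rw [happ, norm_smul, hinner x, Real.norm_eq_abs]
  calc |inner ℝ sv x| * ‖sv‖ ≤ ‖sv‖ * ‖x‖ * ‖sv‖ := by
        have := abs_real_inner_le_norm sv x
        exact mul_le_mul_of_nonneg_right this (norm_nonneg _)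
    _ = v ⬝ᵥ v * ‖x‖ := by rw [← hsv2]; ring

lemma key_rayleigh {p : ℕ} [NeZero p] (S : Matrix (Fin p) (Fin p) ℝ) (hS : S.PosDef)
    (x : Fin p → ℝ) :
    x ⬝ᵥ x ≤ (⨆ i, hS.1.eigenvalues i) * (x ⬝ᵥ (S⁻¹ *ᵥ x)) := by
  set μ := hS.1.eigenvalues with hμ
  set U : Matrix (Fin p) (Fin p) ℝ := (hS.1.eigenvectorUnitary : Matrix (Fin p) (Fin p) ℝ) with hUdef
  have hUU : U * star U = 1 := mem_unitaryGroup_iff.mp hS.1.eigenvectorUnitary.2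
  have hUU' : star U * U = 1 := mem_unitaryGroup_iff'.mp hS.1.eigenvectorUnitary.2
  have hspec : S = U * diagonal μ * star U := by
    simpa using hS.1.spectral_theorem
  have hμpos : ∀ i, 0 < μ i := hS.eigenvalues_pos
  have hinv : S⁻¹ = U * diagonal μ⁻¹ * star U := by
    apply inv_eq_right_inv
    rw [hspec]
    calc (U * diagonal μ * star U) * (U * diagonal μ⁻¹ * star U)
        = U * (diagonal μ * ((star U * U) * (diagonal μ⁻¹ * star U))) := by
          simp only [Matrix.mul_assoc]
      _ = U * ((diagonal μ * diagonal μ⁻¹) * star U) := by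
          rw [hUU', Matrix.one_mul, Matrix.mul_assoc]
      _ = U * star U := by
          rw [diagonal_mul_diagonal]
          have h1 : (fun i => μ i * μ⁻¹ i) = (1 : Fin p → ℝ) := by
            funext i
            exact mul_inv_cancel₀ (hμpos i).ne'
          rw [h1]
          rw [show diagonal (1 : Fin p → ℝ) = (1 : Matrix (Fin p) (Fin p) ℝ) from diagonal_one,
            Matrix.one_mul]
      _ = 1 := hUU
  set w : Fin p → ℝ := star U *ᵥ x with hw
  have hswap : ∀ z : Fin p → ℝ, x ⬝ᵥ (U *ᵥ z) = w ⬝ᵥ z := by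
    intro z
    rw [dotProduct_mulVec, hw, star_eq_conjTranspose,
      conjTranspose_eq_transpose_of_trivial, mulVec_transpose]
  have hq : x ⬝ᵥ (S⁻¹ *ᵥ x) = ∑ i, (μ i)⁻¹ * (w i * w i) := by
    rw [hinv, ← Matrix.mulVec_mulVec, ← Matrix.mulVec_mulVec, hswap, ← hw]
    simp only [dotProduct, mulVec_diagonal]
    exact Finset.sum_congr rfl fun i _ => by simp [Pi.inv_apply]; ring
  have hx2 : x ⬝ᵥ x = ∑ i, w i * w i := by
    have h1 : w ⬝ᵥ w = x ⬝ᵥ x := by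
      have : w ⬝ᵥ w = x ⬝ᵥ (U *ᵥ w) := (hswap w).symm
      rw [this, hw, Matrix.mulVec_mulVec, hUU, Matrix.one_mulVec]
    rw [← h1]; rfl
  have hbdd : BddAbove (Set.range μ) := (Set.finite_range μ).bddAbove
  have hle : ∀ i, μ i ≤ ⨆ i, μ i := fun i => le_ciSup hbdd i
  rw [hx2, hq, Finset.mul_sum]
  refine Finset.sum_le_sum fun i _ => ?_
  have h1 : w i * w i = μ i * ((μ i)⁻¹ * (w i * w i)) := by
    rw [← mul_assoc, mul_inv_cancel₀ (hμpos i).ne', one_mul]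
  conv_lhs => rw [h1]
  exact mul_le_mul_of_nonneg_right (hle i)
    (mul_nonneg (inv_nonneg.mpr (hμpos i).le) (mul_self_nonneg _))

/-- Worst-case bound on the total contribution of `m` arbitrary (adversarial) outliers
to the first-order condition of the robust scale estimator: for any `v₁, …, v_m ∈ ℝ^p`
and symmetric positive definite `Σ`, the operator norm of
`Σₜ vₜvₜᵀ/(1 + vₜᵀΣ⁻¹vₜ/ν)` is at most `m·ν·λ_max(Σ)`. -/
theorem outlier_scale_contribution_bound {p m : ℕ} (hp : 1 ≤ p) (hm : 1 ≤ m)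
    {ν : ℝ} (hν : 0 < ν)
    (v : Fin m → Fin p → ℝ) (S : Matrix (Fin p) (Fin p) ℝ) (hS : S.PosDef) :
    matOpNorm (∑ t, (1 + (v t ⬝ᵥ (S⁻¹ *ᵥ v t)) / ν)⁻¹ • vecMulVec (v t) (v t))
      ≤ (m : ℝ) * ν * (⨆ i, hS.1.eigenvalues i) := by
  haveI : NeZero p := ⟨by omega⟩
  set lam := ⨆ i, hS.1.eigenvalues i with hlam
  have hlampos : 0 < lam := by
    have := hS.eigenvalues_pos (⟨0, by omega⟩ : Fin p)
    exact lt_of_lt_of_le this (le_ciSup ((Set.finite_range _).bddAbove) _)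
  have hterm : ∀ t : Fin m,
      matOpNorm ((1 + (v t ⬝ᵥ (S⁻¹ *ᵥ v t)) / ν)⁻¹ • vecMulVec (v t) (v t)) ≤ ν * lam := by
    intro t
    set q := v t ⬝ᵥ (S⁻¹ *ᵥ v t) with hqdef
    have hkey : v t ⬝ᵥ v t ≤ lam * q := key_rayleigh S hS (v t)
    have hvv : (0:ℝ) ≤ v t ⬝ᵥ v t := Finset.sum_nonneg fun i _ => mul_self_nonneg _
    have hq0 : 0 ≤ q := nonneg_of_mul_nonneg_right (le_trans hvv hkey) hlampos
    have hden : (0:ℝ) < 1 + q / ν := by positivity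
    have hnorm : matOpNorm ((1 + q / ν)⁻¹ • vecMulVec (v t) (v t))
        = (1 + q / ν)⁻¹ * matOpNorm (vecMulVec (v t) (v t)) := by
      unfold matOpNorm
      rw [_root_.map_smul]
      rw [norm_smul ((1 + q / ν)⁻¹) (toEuclideanCLM (𝕜 := ℝ) (vecMulVec (v t) (v t)))]
      rw [Real.norm_eq_abs, abs_of_pos (inv_pos.mpr hden)]
    rw [hnorm]
    have h2 : (1 + q / ν)⁻¹ * matOpNorm (vecMulVec (v t) (v t))
        ≤ (1 + q / ν)⁻¹ * (v t ⬝ᵥ v t) :=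
      mul_le_mul_of_nonneg_left (matOpNorm_vecMulVec_le (v t)) (inv_pos.mpr hden).le
    refine h2.trans ?_
    rw [inv_mul_le_iff₀ hden]
    have : ν * lam * (1 + q / ν) = ν * lam + lam * q := by
      field_simp
    calc v t ⬝ᵥ v t ≤ lam * q := hkey
      _ ≤ ν * lam + lam * q := by nlinarith
      _ = (1 + q / ν) * (ν * lam) := by field_simp
  have hsum : matOpNorm (∑ t, (1 + (v t ⬝ᵥ (S⁻¹ *ᵥ v t)) / ν)⁻¹ • vecMulVec (v t) (v t))
      ≤ ∑ t : Fin m, matOpNorm ((1 + (v t ⬝ᵥ (S⁻¹ *ᵥ v t)) / ν)⁻¹ • vecMulVec (v t) (v t)) := by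
    unfold matOpNorm
    rw [map_sum]
    exact norm_sum_le _ _
  refine hsum.trans ?_
  calc (∑ t : Fin m, matOpNorm ((1 + (v t ⬝ᵥ (S⁻¹ *ᵥ v t)) / ν)⁻¹ • vecMulVec (v t) (v t)))
      ≤ ∑ _t : Fin m, ν * lam := Finset.sum_le_sum fun t _ => hterm t
    _ = (m : ℝ) * ν * lam := by
        rw [Finset.sum_const, Finset.card_univ, Fintype.card_fin, nsmul_eq_mul, mul_assoc]
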